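/- Let ε > 0, γ ∈ [-3,0), m_ε(x) := min{2, ε x^γ}, μ_ε(x) := 1 - m_ε(x), and a₁(x, μ) := x √((1+μ)/2) for x > 0. For measurable η : R⁺ → [0,∞) and p ∈ [1, ∞), the change-of-variables estimate J_{p,ε}(η) := ∫_{ε^{1/3}}^∞ η(a₁(x, μ_ε(x)))^p x² dx ≤ √2 ∫₀^∞ η(y)^p y² dy holds (for γ = -3, with a₁(x, μ_ε(x)) = √(x² - ε/(2x)) on x ≥ ε^{1/3}). -/

import Mathlib

open Real MeasureTheory

/-- Change-of-variables estimate (γ = -3 case): with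
`a₁(x, μ_ε(x)) = √(x² - ε/(2x))` on `x ≥ ε^{1/3}`,
`J_{p,ε}(η) = ∫_{ε^{1/3}}^∞ η(a₁(x, μ_ε(x)))^p x² dx ≤ √2 ∫₀^∞ η(y)^p y² dy`. -/
theorem stmt_12 (ε : ℝ) (hε : 0 < ε) (p : ℝ) (hp : 1 ≤ p)
    (η : ℝ → ℝ) (hη : Measurable η) (hη0 : ∀ x, 0 ≤ η x)
    (a₁ : ℝ → ℝ) (ha₁ : ∀ x, a₁ x = Real.sqrt (x ^ 2 - ε / (2 * x))) :
    (∫⁻ x in Set.Ioi (ε ^ ((1:ℝ)/3)), ENNReal.ofReal (η (a₁ x) ^ p * x ^ 2))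
      ≤ ENNReal.ofReal (Real.sqrt 2)
          * ∫⁻ y in Set.Ioi (0:ℝ), ENNReal.ofReal (η y ^ p * y ^ 2) := by
  set c : ℝ := ε ^ ((1:ℝ)/3) with hc
  have hc0 : 0 < c := Real.rpow_pos_of_pos hε _
  have hc3 : c ^ 3 = ε := by
    rw [hc, ← Real.rpow_natCast (ε ^ ((1:ℝ)/3)) 3, ← Real.rpow_mul hε.le]
    norm_num
  set s : Set ℝ := Set.Ioi c with hs
  set g : ℝ → ℝ := fun x => x ^ 2 - ε / (2 * x) with hg
  set f' : ℝ → ℝ := fun x => (2 * x + ε / (2 * x ^ 2)) / (2 * Real.sqrt (g x)) with hf'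
  -- basic facts on s
  have hx0 : ∀ x ∈ s, 0 < x := fun x hx => lt_trans hc0 hx
  have hgpos : ∀ x ∈ s, x ^ 2 / 2 < g x := by
    intro x hx
    have hx' : c < x := hx
    have hxp := hx0 x hx
    have h3 : ε < x ^ 3 := by
      rw [← hc3]; exact pow_lt_pow_left₀ hx' hc0.le (by norm_num)
    have : ε / (2 * x) < x ^ 2 / 2 := by
      rw [div_lt_div_iff₀ (by positivity) (by norm_num)]
      nlinarith
    simp only [hg]; nlinarith
  have hgpos' : ∀ x ∈ s, 0 < g x := by
    intro x hx
    have hxp := hx0 x hx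
    exact lt_trans (by positivity) (hgpos x hx)
  have ha_sq : ∀ x ∈ s, a₁ x ^ 2 = g x := by
    intro x hx
    rw [ha₁ x, Real.sq_sqrt (hgpos' x hx).le]
  have ha_pos : ∀ x ∈ s, 0 < a₁ x := by
    intro x hx; rw [ha₁ x]; exact Real.sqrt_pos.2 (hgpos' x hx)
  -- derivative
  have hderiv : ∀ x ∈ s, HasDerivWithinAt a₁ (f' x) s x := by
    intro x hx
    have hxp := hx0 x hx
    have hgd : HasDerivAt g (2 * x + ε / (2 * x ^ 2)) x := by
      have h1 : HasDerivAt (fun x : ℝ => x ^ 2) (2 * x) x := by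
        simpa using hasDerivAt_pow 2 x
      have h2 : HasDerivAt (fun x : ℝ => ε / (2 * x)) (-(ε / (2 * x ^ 2))) x := by
        have hd : HasDerivAt (fun x : ℝ => 2 * x) 2 x := by
          simpa using (hasDerivAt_id x).const_mul 2
        have hinv := hd.inv (by positivity : (2:ℝ) * x ≠ 0)
        have hm := hinv.const_mul ε
        have hfun : (fun x : ℝ => ε / (2 * x)) = fun x => ε * (2 * x)⁻¹ := by
          funext y; rw [div_eq_mul_inv]
        rw [hfun]
        refine hm.congr_deriv ?_
        field_simp
      exact (h1.sub h2).congr_deriv (by ring)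
    have hsq : HasDerivAt a₁ (f' x) x := by
      have := (Real.hasDerivAt_sqrt (ne_of_gt (hgpos' x hx))).comp x hgd
      have heq : a₁ = fun y => Real.sqrt (g y) := by
        funext y; rw [ha₁ y]
      rw [heq, hf']
      refine this.congr_deriv ?_
      beta_reduce
      ring
    exact hsq.hasDerivWithinAt
  -- injectivity
  have hmono : Set.InjOn a₁ s := by
    intro x hx y hy hxy
    have h1 : g x = g y := by
      have := congrArg (fun t => t ^ 2) hxy
      simpa [ha_sq x hx, ha_sq y hy] using this
    by_contra hne
    rcases lt_or_gt_of_ne hne with h | h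
    · have hlt : g x < g y := by
        have hxp := hx0 x hx
        have hyp := hx0 y hy
        have h0 : x ^ 2 < y ^ 2 := by nlinarith
        have h2 : ε / (2 * y) < ε / (2 * x) := by
          apply div_lt_div_of_pos_left hε (by positivity) (by nlinarith)
        simp only [hg]; linarith
      linarith
    · have hlt : g y < g x := by
        have hxp := hx0 x hx
        have hyp := hx0 y hy
        have h0 : y ^ 2 < x ^ 2 := by nlinarith
        have h2 : ε / (2 * x) < ε / (2 * y) := by
          apply div_lt_div_of_pos_left hε (by positivity) (by nlinarith)
        simp only [hg]; linarith
      linarith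
  have hsmeas : MeasurableSet s := measurableSet_Ioi
  -- f' positive, and key inequality x² ≤ √2 * f' x * (a₁ x)²
  have hf'pos : ∀ x ∈ s, 0 < f' x := by
    intro x hx
    have hxp := hx0 x hx
    exact div_pos (by positivity)
      (mul_pos two_pos (Real.sqrt_pos.2 (hgpos' x hx)))
  have hkey : ∀ x ∈ s, x ^ 2 ≤ Real.sqrt 2 * (f' x * a₁ x ^ 2) := by
    intro x hx
    have hxp := hx0 x hx
    have hap := ha_pos x hx
    have hga : Real.sqrt (g x) = a₁ x := (ha₁ x).symm
    have hfa : f' x * a₁ x ^ 2 = a₁ x * (x + ε / (4 * x ^ 2)) := by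
      rw [hf']
      simp only [hga]
      field_simp
      ring
    rw [hfa]
    -- a₁ x ≥ x / √2
    have ha_lb : x / Real.sqrt 2 ≤ a₁ x := by
      have h1 : (x / Real.sqrt 2) ^ 2 ≤ a₁ x ^ 2 := by
        rw [div_pow, Real.sq_sqrt (by norm_num : (2:ℝ) ≥ 0)]
        rw [ha_sq x hx]
        exact (hgpos x hx).le
      have h2 : 0 ≤ x / Real.sqrt 2 := by positivity
      nlinarith
    have hs2 : (0:ℝ) < Real.sqrt 2 := by positivity
    have h3 : x ≤ Real.sqrt 2 * a₁ x := by
      rw [div_le_iff₀ hs2] at ha_lb; linarith [ha_lb]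
    have h4 : x ≤ x + ε / (4 * x ^ 2) := by
      have : 0 < ε / (4 * x ^ 2) := by positivity
      linarith
    calc x ^ 2 = x * x := sq x
      _ ≤ (Real.sqrt 2 * a₁ x) * (x + ε / (4 * x ^ 2)) := by
          apply mul_le_mul h3 h4 hxp.le (by positivity)
      _ = Real.sqrt 2 * (a₁ x * (x + ε / (4 * x ^ 2))) := by ring
  -- pointwise bound in ℝ≥0∞
  have hpt : ∀ x ∈ s, ENNReal.ofReal (η (a₁ x) ^ p * x ^ 2)
      ≤ ENNReal.ofReal (Real.sqrt 2) *
        (ENNReal.ofReal |f' x| * ENNReal.ofReal (η (a₁ x) ^ p * a₁ x ^ 2)) := by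
    intro x hx
    rw [← ENNReal.ofReal_mul (by positivity), ← ENNReal.ofReal_mul (by positivity)]
    apply ENNReal.ofReal_le_ofReal
    have hηp : 0 ≤ η (a₁ x) ^ p := Real.rpow_nonneg (hη0 _) p
    have := hkey x hx
    rw [abs_of_pos (hf'pos x hx)]
    calc η (a₁ x) ^ p * x ^ 2 ≤ η (a₁ x) ^ p * (Real.sqrt 2 * (f' x * a₁ x ^ 2)) :=
          mul_le_mul_of_nonneg_left this hηp
      _ = Real.sqrt 2 * (f' x * (η (a₁ x) ^ p * a₁ x ^ 2)) := by ring
  -- change of variables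
  have hcov : (∫⁻ x in s, ENNReal.ofReal |f' x| * ENNReal.ofReal (η (a₁ x) ^ p * a₁ x ^ 2))
      = ∫⁻ y in a₁ '' s, ENNReal.ofReal (η y ^ p * y ^ 2) := by
    have := MeasureTheory.lintegral_image_eq_lintegral_abs_det_fderiv_mul
      (volume : Measure ℝ) hsmeas
      (f' := fun x => ContinuousLinearMap.smulRight (1 : ℝ →L[ℝ] ℝ) (f' x))
      (fun x hx => (hderiv x hx).hasFDerivWithinAt) hmono
      (fun y => ENNReal.ofReal (η y ^ p * y ^ 2))
    rw [this]
    congr 1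
    funext x
    congr 2
    rw [ContinuousLinearMap.det_smulRight, ContinuousLinearMap.one_apply, one_mul]
  -- image is in Ioi 0
  have himg : a₁ '' s ⊆ Set.Ioi (0:ℝ) := by
    rintro y ⟨x, hx, rfl⟩
    exact ha_pos x hx
  calc (∫⁻ x in s, ENNReal.ofReal (η (a₁ x) ^ p * x ^ 2))
      ≤ ∫⁻ x in s, ENNReal.ofReal (Real.sqrt 2) *
          (ENNReal.ofReal |f' x| * ENNReal.ofReal (η (a₁ x) ^ p * a₁ x ^ 2)) :=
        setLIntegral_mono' hsmeas hpt
    _ = ENNReal.ofReal (Real.sqrt 2) *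
          ∫⁻ x in s, ENNReal.ofReal |f' x| * ENNReal.ofReal (η (a₁ x) ^ p * a₁ x ^ 2) :=
        lintegral_const_mul' _ _ ENNReal.ofReal_ne_top
    _ = ENNReal.ofReal (Real.sqrt 2) * ∫⁻ y in a₁ '' s, ENNReal.ofReal (η y ^ p * y ^ 2) := by
        rw [hcov]
    _ ≤ ENNReal.ofReal (Real.sqrt 2) * ∫⁻ y in Set.Ioi (0:ℝ), ENNReal.ofReal (η y ^ p * y ^ 2) :=
        mul_le_mul_right (lintegral_mono_set himg) _
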